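/- For every finite simple graph G and every complex number u, the non-backtracking edge-adjacency matrix B, the vertex adjacency matrix A, and the diagonal degree matrix D satisfy the Ihara–Bass identity (1 − u²)^{|V|} · det(I − u·B) = (1 − u²)^{|E|} · det(I − u·A + u²·(D − I)), where |V| is the number of vertices and |E| the number of unoriented edges. -/

import Mathlib

open Matrix

variable {V : Type*}

/-- A dart `d'` follows a dart `d` without backtracking: the tail of `d'` equals the head
of `d` and `d'` is not the reversal of `d`. -/
def FollowsNB {G : SimpleGraph V} (d' d : G.Dart) : Prop :=
  d'.fst = d.snd ∧ d' ≠ d.symm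

instance {G : SimpleGraph V} [DecidableEq V] (d' d : G.Dart) : Decidable (FollowsNB d' d) :=
  inferInstanceAs (Decidable (_ ∧ _))

/-- The non-backtracking edge-adjacency matrix of a finite simple graph. -/
def nbMatrix (G : SimpleGraph V) [Fintype V] [DecidableEq V] [DecidableRel G.Adj] :
    Matrix G.Dart G.Dart ℂ :=
  fun d' d => if FollowsNB d' d then 1 else 0

section Aux

variable (G : SimpleGraph V) [Fintype V] [DecidableEq V] [DecidableRel G.Adj]

/-- tail incidence matrix -/
def tailM : Matrix V G.Dart ℂ := fun x d => if d.fst = x then 1 else 0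

/-- head incidence matrix -/
def headM : Matrix V G.Dart ℂ := fun x d => if d.snd = x then 1 else 0

/-- dart reversal matrix -/
def symM : Matrix G.Dart G.Dart ℂ := fun d' d => if d' = d.symm then 1 else 0

lemma nb_eq : nbMatrix G = (tailM G)ᵀ * headM G - symM G := by
  ext d' d
  simp only [nbMatrix, Matrix.sub_apply, Matrix.mul_apply, Matrix.transpose_apply,
    tailM, headM, symM, ite_mul, one_mul, zero_mul, Finset.sum_ite_eq, Finset.mem_univ,
    if_true, FollowsNB]
  by_cases h : d' = d.symm
  · subst h
    simp [SimpleGraph.Dart.symm]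
  · by_cases h2 : d'.fst = d.snd <;> simp [h, h2, eq_comm]

lemma symM_mul_symM : symM G * symM G = 1 := by
  ext d' d
  rw [Matrix.mul_apply, Finset.sum_eq_single d.symm]
  · by_cases h : d' = d <;>
      simp [symM, Matrix.one_apply, h, SimpleGraph.Dart.symm_symm]
  · intro b _ hb
    simp [symM, hb]
  · simp

lemma headM_mul_symM : headM G * symM G = tailM G := by
  ext x d
  simp only [Matrix.mul_apply, headM, symM, tailM, mul_ite, mul_one, mul_zero,
    Finset.sum_ite_eq', Finset.mem_univ, if_true]
  rfl

lemma headM_mul_tailM_transpose : headM G * (tailM G)ᵀ = G.adjMatrix ℂ := by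
  ext x y
  simp only [Matrix.mul_apply, Matrix.transpose_apply, headM, tailM,
    SimpleGraph.adjMatrix_apply]
  by_cases h : G.Adj x y
  · rw [Finset.sum_eq_single (SimpleGraph.Dart.mk (y, x) h.symm)]
    · simp [h]
    · intro d _ hd
      by_cases h1 : d.snd = x <;> by_cases h2 : d.fst = y <;> simp only [h1, h2, if_true,
        if_false, mul_one, mul_zero, one_mul, zero_mul, ite_self]
      exact absurd (SimpleGraph.Dart.ext _ _ (Prod.ext h2 h1)) hd
    · simp
  · rw [if_neg h, Finset.sum_eq_zero]
    intro d _
    by_cases h1 : d.snd = x <;> by_cases h2 : d.fst = y <;> simp only [h1, h2, if_true,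
      if_false, mul_one, mul_zero, one_mul, zero_mul, ite_self]
    exact absurd (h2 ▸ h1 ▸ d.adj).symm h

lemma tailM_mul_tailM_transpose :
    tailM G * (tailM G)ᵀ = Matrix.diagonal (fun x => (G.degree x : ℂ)) := by
  ext x y
  simp only [Matrix.mul_apply, Matrix.transpose_apply, tailM, Matrix.diagonal_apply]
  by_cases h : x = y
  · subst h
    simp only [if_pos rfl, ite_mul, one_mul, zero_mul]
    have : ∀ d : G.Dart, (if d.fst = x then (if d.fst = x then (1:ℂ) else 0) else 0)
        = if d.fst = x then 1 else 0 := by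
      intro d; by_cases hd : d.fst = x <;> simp [hd]
    rw [Finset.sum_congr rfl (fun d _ => this d), Finset.sum_boole,
      ← G.dart_fst_fiber_card_eq_degree x]
    norm_num
  · rw [if_neg h, Finset.sum_eq_zero]
    intro d _
    by_cases h1 : d.fst = x <;> by_cases h2 : d.fst = y <;> simp_all

lemma det_one_add_smul_symM (u : ℂ) :
    Matrix.det (1 + u • symM G) = (1 - u ^ 2) ^ G.edgeFinset.card := by
  classical
  let eV := Fintype.equivFin V
  let R := {d : G.Dart // eV d.fst < eV d.snd}
  have key : ∀ a b : R, (a : G.Dart) ≠ (b : G.Dart).symm := by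
    rintro ⟨a, ha⟩ ⟨b, hb⟩ hab
    simp only at hab
    subst hab
    exact absurd hb (not_lt.mpr (le_of_lt ha))
  let e : R ⊕ R ≃ G.Dart :=
  { toFun := Sum.elim (fun r => r.1) (fun r => r.1.symm)
    invFun := fun d =>
      if h : eV d.fst < eV d.snd then Sum.inl ⟨d, h⟩
      else Sum.inr ⟨d.symm, lt_of_le_of_ne (not_lt.mp h)
        (fun hc => d.adj.ne (eV.injective hc).symm)⟩
    left_inv := by
      rintro (r | r)
      · simp only [Sum.elim_inl]
        exact dif_pos r.2
      · simp only [Sum.elim_inr]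
        have hc : ¬ eV (r : G.Dart).symm.toProd.1 < eV (r : G.Dart).symm.toProd.2 :=
          not_lt.mpr (le_of_lt r.2)
        refine (dif_neg hc).trans ?_
        exact congrArg Sum.inr (Subtype.ext (SimpleGraph.Dart.symm_symm _))
    right_inv := by
      intro d
      by_cases h : eV d.fst < eV d.snd
      · simp only [dif_pos h, Sum.elim_inl]
      · simp only [dif_neg h, Sum.elim_inr]
        exact SimpleGraph.Dart.symm_symm d }
  have hsymminj : Function.Injective (SimpleGraph.Dart.symm : G.Dart → G.Dart) :=
    SimpleGraph.Dart.symm_involutive.injective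
  have he1 : ∀ r : R, e (Sum.inl r) = (r : G.Dart) := fun _ => rfl
  have he2 : ∀ r : R, e (Sum.inr r) = (r : G.Dart).symm := fun _ => rfl
  have hM : (1 + u • symM G).submatrix e e
      = Matrix.fromBlocks 1 (u • 1) (u • 1) (1 : Matrix R R ℂ) := by
    ext i j
    rcases i with r' | r' <;> rcases j with r | r <;>
      simp only [Matrix.submatrix_apply, he1, he2, Matrix.add_apply, Matrix.smul_apply,
        Matrix.one_apply, symM, smul_eq_mul,
        Matrix.fromBlocks_apply₁₁, Matrix.fromBlocks_apply₁₂, Matrix.fromBlocks_apply₂₁,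
        Matrix.fromBlocks_apply₂₂]
    · rw [if_neg (key r' r), mul_zero, add_zero]
      simp [Subtype.coe_inj]
    · rw [if_neg (key r' r), SimpleGraph.Dart.symm_symm, zero_add]
      simp [Subtype.coe_inj]
    · rw [if_neg (fun h : (r' : G.Dart).symm = (r : G.Dart) => key r r' h.symm), zero_add]
      simp [hsymminj.eq_iff, Subtype.coe_inj]
    · rw [SimpleGraph.Dart.symm_symm,
        if_neg (fun h : (r' : G.Dart).symm = (r : G.Dart) => key r r' h.symm),
        mul_zero, add_zero]
      simp [hsymminj.eq_iff, Subtype.coe_inj]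
  have hcard : Fintype.card R = G.edgeFinset.card := by
    have h2 : Fintype.card (R ⊕ R) = Fintype.card G.Dart := Fintype.card_congr e
    rw [Fintype.card_sum, G.dart_card_eq_twice_card_edges] at h2
    omega
  calc Matrix.det (1 + u • symM G)
      = Matrix.det ((1 + u • symM G).submatrix e e) :=
        (Matrix.det_submatrix_equiv_self e _).symm
    _ = Matrix.det (Matrix.fromBlocks 1 (u • 1) (u • 1) (1 : Matrix R R ℂ)) := by rw [hM]
    _ = Matrix.det ((1 : Matrix R R ℂ) - (u • 1) * (u • 1)) :=
        Matrix.det_fromBlocks_one₁₁ _ _ _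
    _ = Matrix.det ((1 - u ^ 2) • (1 : Matrix R R ℂ)) := by
        rw [Matrix.smul_mul, Matrix.mul_smul, Matrix.mul_one, smul_smul, ← sq, sub_smul, one_smul]
    _ = (1 - u ^ 2) ^ G.edgeFinset.card := by
        rw [Matrix.det_smul, Matrix.det_one, mul_one, hcard]

lemma ihara_bass_aux (G : SimpleGraph V) [Fintype V] [DecidableEq V] [DecidableRel G.Adj]
    (u : ℂ) (hu : 1 - u ^ 2 ≠ 0) :
    (1 - u ^ 2) ^ (Fintype.card V) * Matrix.det (1 - u • nbMatrix G) =
      (1 - u ^ 2) ^ G.edgeFinset.card *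
        Matrix.det (1 - u • G.adjMatrix ℂ +
          (u ^ 2) • (Matrix.diagonal (fun x => (G.degree x : ℂ)) - 1)) := by
  classical
  have hcard : Fintype.card G.Dart = 2 * G.edgeFinset.card := G.dart_card_eq_twice_card_edges
  have hJJ : symM G * symM G = 1 := symM_mul_symM G
  have h0 : (1 + u • symM G) * (1 - u • symM G)
      = (1 - u ^ 2) • (1 : Matrix G.Dart G.Dart ℂ) := by
    rw [add_mul, one_mul, Matrix.smul_mul, mul_sub, mul_one, Matrix.mul_smul, hJJ]
    module
  have h1 : (1 + u • symM G) * ((1 - u ^ 2) • (1 : Matrix G.Dart G.Dart ℂ)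
        - u • ((1 - u • symM G) * ((tailM G)ᵀ * headM G)))
      = (1 - u ^ 2) • (1 - u • nbMatrix G) := by
    rw [nb_eq, mul_sub, Matrix.mul_smul, mul_one, Matrix.mul_smul,
      ← Matrix.mul_assoc, h0, Matrix.smul_mul, one_mul]
    module
  have hc : (1 - u ^ 2) * (u / (1 - u ^ 2)) = u := mul_div_cancel₀ _ hu
  have h2 : ((1 - u ^ 2) • (1 : Matrix G.Dart G.Dart ℂ)
        - u • ((1 - u • symM G) * ((tailM G)ᵀ * headM G)))
      = (1 - u ^ 2) • (1 + ((-(u / (1 - u ^ 2))) • ((1 - u • symM G) * (tailM G)ᵀ)) * headM G) := by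
    rw [Matrix.smul_mul, Matrix.mul_assoc, smul_add, smul_smul, mul_neg, hc, neg_smul]
    module
  have h4 : headM G * ((1 - u • symM G) * (tailM G)ᵀ)
      = G.adjMatrix ℂ - u • Matrix.diagonal (fun x => (G.degree x : ℂ)) := by
    rw [Matrix.sub_mul, Matrix.one_mul, Matrix.smul_mul, Matrix.mul_sub, Matrix.mul_smul,
      ← Matrix.mul_assoc, headM_mul_symM, headM_mul_tailM_transpose, tailM_mul_tailM_transpose]
  have h3 : Matrix.det ((1 - u ^ 2) • (1 : Matrix G.Dart G.Dart ℂ)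
        - u • ((1 - u • symM G) * ((tailM G)ᵀ * headM G)))
      = (1 - u ^ 2) ^ (2 * G.edgeFinset.card) *
        Matrix.det (1 + (-(u / (1 - u ^ 2))) •
          (G.adjMatrix ℂ - u • Matrix.diagonal (fun x => (G.degree x : ℂ)))) := by
    rw [h2, Matrix.det_smul, hcard, Matrix.det_one_add_mul_comm, Matrix.mul_smul, h4]
  have hdetJ : Matrix.det (1 + u • symM G) = (1 - u ^ 2) ^ G.edgeFinset.card :=
    det_one_add_smul_symM G u
  have hkey : (1 - u ^ 2) ^ (2 * G.edgeFinset.card) * Matrix.det (1 - u • nbMatrix G)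
      = (1 - u ^ 2) ^ (2 * G.edgeFinset.card) * ((1 - u ^ 2) ^ G.edgeFinset.card *
          Matrix.det (1 + (-(u / (1 - u ^ 2))) •
            (G.adjMatrix ℂ - u • Matrix.diagonal (fun x => (G.degree x : ℂ))))) := by
    have hdet := congrArg Matrix.det h1
    rw [Matrix.det_mul, h3, hdetJ, Matrix.det_smul, hcard] at hdet
    rw [← hdet]
    ring
  have hkey2 : Matrix.det (1 - u • nbMatrix G)
      = (1 - u ^ 2) ^ G.edgeFinset.card *
          Matrix.det (1 + (-(u / (1 - u ^ 2))) •
            (G.adjMatrix ℂ - u • Matrix.diagonal (fun x => (G.degree x : ℂ)))) :=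
    mul_left_cancel₀ (pow_ne_zero _ hu) hkey
  have h5 : (1 - u ^ 2) • ((1 : Matrix V V ℂ) + (-(u / (1 - u ^ 2))) •
        (G.adjMatrix ℂ - u • Matrix.diagonal (fun x => (G.degree x : ℂ))))
      = 1 - u • G.adjMatrix ℂ +
          (u ^ 2) • (Matrix.diagonal (fun x => (G.degree x : ℂ)) - 1) := by
    rw [smul_add, smul_smul, mul_neg, hc, neg_smul]
    module
  calc (1 - u ^ 2) ^ (Fintype.card V) * Matrix.det (1 - u • nbMatrix G)
      = (1 - u ^ 2) ^ G.edgeFinset.card * ((1 - u ^ 2) ^ (Fintype.card V) *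
          Matrix.det (1 + (-(u / (1 - u ^ 2))) •
            (G.adjMatrix ℂ - u • Matrix.diagonal (fun x => (G.degree x : ℂ))))) := by
        rw [hkey2]; ring
    _ = (1 - u ^ 2) ^ G.edgeFinset.card *
          Matrix.det ((1 - u ^ 2) • ((1 : Matrix V V ℂ) + (-(u / (1 - u ^ 2))) •
            (G.adjMatrix ℂ - u • Matrix.diagonal (fun x => (G.degree x : ℂ))))) := by
        rw [Matrix.det_smul]
    _ = (1 - u ^ 2) ^ G.edgeFinset.card *
        Matrix.det (1 - u • G.adjMatrix ℂ +
          (u ^ 2) • (Matrix.diagonal (fun x => (G.degree x : ℂ)) - 1)) := by rw [h5]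

end Aux


/-- **Ihara–Bass identity**: for every finite simple graph `G` and every complex `u`,
`(1 − u²)^{|V|} · det(I − u·B) = (1 − u²)^{|E|} · det(I − u·A + u²·(D − I))`. -/
theorem ihara_bass (G : SimpleGraph V) [Fintype V] [DecidableEq V] [DecidableRel G.Adj]
    (u : ℂ) :
    (1 - u ^ 2) ^ (Fintype.card V) * Matrix.det (1 - u • nbMatrix G) =
      (1 - u ^ 2) ^ G.edgeFinset.card *
        Matrix.det (1 - u • G.adjMatrix ℂ +
          (u ^ 2) • (Matrix.diagonal (fun x => (G.degree x : ℂ)) - 1)) := by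
  classical
  let f : ℂ → ℂ := fun u => (1 - u ^ 2) ^ (Fintype.card V) * Matrix.det (1 - u • nbMatrix G)
  let g : ℂ → ℂ := fun u => (1 - u ^ 2) ^ G.edgeFinset.card *
    Matrix.det (1 - u • G.adjMatrix ℂ +
      (u ^ 2) • (Matrix.diagonal (fun x => (G.degree x : ℂ)) - 1))
  suffices h : f = g from congrFun h u
  have hdense : Dense {u : ℂ | 1 - u ^ 2 = 0}ᶜ := by
    have hsub : {u : ℂ | 1 - u ^ 2 = 0} ⊆ {1, -1} := by
      intro x hx
      simp only [Set.mem_setOf_eq, sub_eq_zero] at hx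
      have hx2 : (x - 1) * (x + 1) = 0 := by linear_combination -hx
      rcases mul_eq_zero.mp hx2 with h | h
      · exact Or.inl (sub_eq_zero.mp h)
      · exact Or.inr (eq_neg_of_add_eq_zero_left h)
    exact Set.Countable.dense_compl ℂ ((Set.toFinite ({1, -1} : Set ℂ)).subset hsub).countable
  have hcf : Continuous f := by
    refine Continuous.mul (by fun_prop) (Continuous.matrix_det ?_)
    exact continuous_const.sub (continuous_id.smul continuous_const)
  have hcg : Continuous g := by
    refine Continuous.mul (by fun_prop) (Continuous.matrix_det ?_)
    exact (continuous_const.sub (continuous_id.smul continuous_const)).add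
      ((continuous_pow 2).smul continuous_const)
  refine hcf.ext_on hdense hcg ?_
  intro x hx
  exact ihara_bass_aux G x hx
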